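/- Let k be an algebraically closed field of characteristic p > 0 and q a power of p. For any matrix A in GL_{n+1}(k), there exists T in GL_{n+1}(k) such that ᵗT · A · T^(q) = I_{n+1}, where T^(q) denotes the matrix obtained from T by raising each entry to the q-th power. -/

import Mathlib

open Matrix Polynomial

namespace FermatNF

set_option linter.unusedSectionVars false

variable {k : Type*} [Field k] [IsAlgClosed k]

/-- Artin–Schreier style root existence. -/
lemma as_root {N : ℕ} (hN : 2 ≤ N) (s : k) : ∃ t : k, t ^ N + s = t := by
  have hdeg : (X ^ N - X + C s : k[X]).degree ≠ 0 := by
    have hc : (X ^ N - X + C s : k[X]).coeff N = 1 := by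
      have h1 : N ≠ 1 := by omega
      have h0 : N ≠ 0 := by omega
      simp [coeff_X, coeff_C, h0, Ne.symm h1]
    have hle : (N : WithBot ℕ) ≤ (X ^ N - X + C s : k[X]).degree :=
      le_degree_of_ne_zero (by rw [hc]; exact one_ne_zero)
    intro h0
    rw [h0] at hle
    have : N ≤ 0 := by exact_mod_cast hle
    omega
  obtain ⟨t, ht⟩ := IsAlgClosed.exists_root (X ^ N - X + C s) hdeg
  refine ⟨t, ?_⟩
  have h : t ^ N - t + s = 0 := by simpa using ht
  linear_combination h

section blockM

variable {m : ℕ}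

/-- Block matrix with top-left `x`, top-right row `r`, zero bottom-left column,
bottom-right `D`. -/
def blockM (x : k) (r : Fin m → k) (D : Matrix (Fin m) (Fin m) k) :
    Matrix (Fin (m + 1)) (Fin (m + 1)) k :=
  Matrix.of fun i => Fin.cases (Fin.cons x r) (fun i' => Fin.cons 0 (D i')) i

@[simp] lemma blockM_00 (x : k) (r : Fin m → k) (D : Matrix (Fin m) (Fin m) k) :
    blockM x r D 0 0 = x := rfl

@[simp] lemma blockM_0s (x : k) (r : Fin m → k) (D : Matrix (Fin m) (Fin m) k) (j : Fin m) :
    blockM x r D 0 j.succ = r j := rfl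

@[simp] lemma blockM_s0 (x : k) (r : Fin m → k) (D : Matrix (Fin m) (Fin m) k) (i : Fin m) :
    blockM x r D i.succ 0 = 0 := rfl

@[simp] lemma blockM_ss (x : k) (r : Fin m → k) (D : Matrix (Fin m) (Fin m) k) (i j : Fin m) :
    blockM x r D i.succ j.succ = D i j := rfl

lemma blockM_mul (x y : k) (r₁ r₂ : Fin m → k) (D₁ D₂ : Matrix (Fin m) (Fin m) k) :
    blockM x r₁ D₁ * blockM y r₂ D₂ =
      blockM (x * y) (x • r₂ + D₂ᵀ.mulVec r₁) (D₁ * D₂) := by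
  ext i j
  rw [Matrix.mul_apply, Fin.sum_univ_succ]
  induction i using Fin.cases with
  | zero =>
    induction j using Fin.cases with
    | zero => simp
    | succ j => simp [Matrix.mulVec, dotProduct, mul_comm]
  | succ i =>
    induction j using Fin.cases with
    | zero => simp
    | succ j => simp [Matrix.mul_apply]

lemma blockM_map (x : k) (r : Fin m → k) (D : Matrix (Fin m) (Fin m) k) (σ : k →+* k) :
    (blockM x r D).map σ = blockM (σ x) (σ ∘ r) (D.map σ) := by
  ext i j
  induction i using Fin.cases with
  | zero =>
    induction j using Fin.cases with
    | zero => simp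
    | succ j => simp
  | succ i =>
    induction j using Fin.cases with
    | zero => simp
    | succ j => simp

lemma blockM_transpose (x : k) (D : Matrix (Fin m) (Fin m) k) :
    (blockM x (0 : Fin m → k) D)ᵀ = blockM x 0 Dᵀ := by
  ext i j
  induction i using Fin.cases with
  | zero =>
    induction j using Fin.cases with
    | zero => rfl
    | succ j => simp [Matrix.transpose_apply]
  | succ i =>
    induction j using Fin.cases with
    | zero => simp [Matrix.transpose_apply]
    | succ j => simp [Matrix.transpose_apply]

lemma blockM_one : blockM (1 : k) (0 : Fin m → k) 1 = 1 := by
  ext i j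
  induction i using Fin.cases with
  | zero =>
    induction j using Fin.cases with
    | zero => simp [Matrix.one_apply]
    | succ j => simp [Matrix.one_apply, (Fin.succ_ne_zero j).symm]
  | succ i =>
    induction j using Fin.cases with
    | zero => simp [Matrix.one_apply, Fin.succ_ne_zero i]
    | succ j => simp [Matrix.one_apply, Fin.succ_inj]

lemma blockM_det (x : k) (r : Fin m → k) (D : Matrix (Fin m) (Fin m) k) :
    (blockM x r D).det = x * D.det := by
  rw [Matrix.det_succ_column_zero, Fin.sum_univ_succ]
  have h1 : ((blockM x r D).submatrix Fin.succ Fin.succ) = D := by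
    ext i j
    simp
  simp [h1, Fin.succAbove_zero]

end blockM

/-- Lemma A: a bijective Frobenius-semilinear endomorphism has a nonzero fixed vector. -/
lemma lemA {N : ℕ} (hN : 2 ≤ N) (σ : k →+* k) (hσ : ∀ x : k, σ x = x ^ N)
    (hsurj : Function.Surjective σ) {m : ℕ} (M : Matrix (Fin (m + 1)) (Fin (m + 1)) k)
    (hM : IsUnit M.det) :
    ∃ v : Fin (m + 1) → k, v ≠ 0 ∧ M.mulVec (σ ∘ v) = v := by
  classical
  set ψ : (Fin (m + 1) → k) → (Fin (m + 1) → k) := fun x => M.mulVec (σ ∘ x) with hψdef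
  have hψinj : Function.Injective ψ := by
    intro x y hxy
    have h2 : M⁻¹.mulVec (ψ x) = M⁻¹.mulVec (ψ y) := by rw [hxy]
    simp only [hψdef, Matrix.mulVec_mulVec, Matrix.nonsing_inv_mul M hM,
      Matrix.one_mulVec] at h2
    funext i
    exact σ.injective (congrFun h2 i)
  have hψsum : ∀ (s : ℕ) (c : Fin s → k) (u : Fin s → (Fin (m + 1) → k)),
      ψ (∑ i, c i • u i) = ∑ i, σ (c i) • ψ (u i) := by
    intro s c u
    have h1 : σ ∘ (∑ i, c i • u i) = ∑ i, σ (c i) • (σ ∘ u i) := by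
      funext j
      simp only [Function.comp_apply, Finset.sum_apply, Pi.smul_apply, smul_eq_mul, map_sum]
      exact Finset.sum_congr rfl fun x _ => _root_.map_mul σ _ _
    show M.mulVec _ = _
    rw [h1, show M.mulVec (∑ i, σ (c i) • (σ ∘ u i)) =
        M.mulVecLin (∑ i, σ (c i) • (σ ∘ u i)) from rfl, map_sum]
    refine Finset.sum_congr rfl fun i _ => ?_
    rw [LinearMap.map_smul]
    rfl
  -- the sequence of iterates
  set W : ℕ → (Fin (m + 1) → k) := fun j => ψ^[j] (Pi.single 0 1) with hWdef
  have hW : ∀ j, W (j + 1) = ψ (W j) := fun j => Function.iterate_succ_apply' ψ j _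
  have hW0 : W 0 = Pi.single 0 1 := rfl
  have hW0ne : W 0 ≠ 0 := by
    intro h
    have := congrFun h 0
    simp [hW0] at this
  set Pred : ℕ → Prop := fun j => LinearIndependent k (fun i : Fin j => W ↑i) with hPreddef
  have hfam : ∀ t : ℕ, (fun i : Fin (t + 1) => W ↑i) = Fin.snoc (fun i : Fin t => W ↑i) (W t) := by
    intro t
    funext i
    induction i using Fin.lastCases with
    | last => rw [Fin.snoc_last]; rfl
    | cast i => rw [Fin.snoc_castSucc]; rfl
  have hP0 : Pred 0 := linearIndependent_empty_type
  have hP1 : Pred 1 := linearIndependent_unique_iff.mpr (by simpa using hW0ne)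
  have hfail : ∃ j, ¬ Pred j := by
    refine ⟨m + 2, fun h => ?_⟩
    have hcard := h.fintype_card_le_finrank
    rw [Module.finrank_fin_fun, Fintype.card_fin] at hcard
    omega
  set n₁ := Nat.find hfail with hn₁def
  have hn₁spec : ¬ Pred n₁ := Nat.find_spec hfail
  have hn₁min : ∀ j, j < n₁ → Pred j := fun j hj => by
    by_contra hc
    exact Nat.find_min hfail hj hc
  have hn₁2 : 2 ≤ n₁ := by
    rcases Nat.lt_or_ge n₁ 2 with h | h
    · interval_cases n₁ <;> [exact absurd hP0 hn₁spec; exact absurd hP1 hn₁spec]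
    · exact h
  obtain ⟨s', hs'⟩ : ∃ s', n₁ = s' + 1 + 1 := ⟨n₁ - 2, by omega⟩
  set s := s' + 1 with hsdef
  have hindep : Pred s := hn₁min s (by omega)
  have hdep : ¬ Pred (s + 1) := by rw [← hs'] at *; exact hn₁spec
  -- extract the linear relation
  have hmem : W s ∈ Submodule.span k (Set.range fun i : Fin s => W ↑i) := by
    by_contra hmem
    refine hdep ?_
    show LinearIndependent k (fun i : Fin (s + 1) => W ↑i)
    rw [hfam s]
    exact linearIndependent_fin_snoc.mpr ⟨hindep, hmem⟩
  obtain ⟨a, ha⟩ := Submodule.mem_span_range_iff_exists_fun k |>.mp hmem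
  -- a 0 ≠ 0
  have ha0 : a 0 ≠ 0 := by
    intro ha0
    have hrel2 : W s = ∑ i : Fin s', a i.succ • W (↑i + 1) := by
      rw [← ha, Fin.sum_univ_succ, ha0, zero_smul, zero_add]
      rfl
    choose b hb using fun i : Fin s' => hsurj (a i.succ)
    have h3 : ψ (∑ i : Fin s', b i • W ↑i) = ψ (W s') := by
      rw [hψsum]
      rw [← hW s']
      rw [hrel2]
      refine Finset.sum_congr rfl fun i _ => ?_
      rw [hb, hW]
    have h4 : W s' = ∑ i : Fin s', b i • W ↑i := (hψinj h3).symm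
    have h5 : W s' ∈ Submodule.span k (Set.range fun i : Fin s' => W ↑i) :=
      Submodule.mem_span_range_iff_exists_fun k |>.mpr ⟨b, h4.symm⟩
    have hindep' : LinearIndependent k (Fin.snoc (fun i : Fin s' => W ↑i) (W s')) := by
      rw [← hfam s']
      exact hindep
    exact (linearIndependent_fin_snoc.mp hindep').2 h5
  -- ℕ-indexed coefficients
  set a' : ℕ → k := fun j => if h : j < s then a ⟨j, h⟩ else 0 with ha'def
  have ha'0 : a' 0 = a 0 := by rw [ha'def]; simp [hsdef]
  have ha'0ne : a' 0 ≠ 0 := by rw [ha'0]; exact ha0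
  -- the polynomials
  set Pl : ℕ → Polynomial k := fun j =>
    Nat.rec (C (a' 0) * X ^ N) (fun j Pj => Pj ^ N + C (a' (j + 1)) * X ^ N) j with hPldef
  have hPl0 : Pl 0 = C (a' 0) * X ^ N := rfl
  have hPlS : ∀ j, Pl (j + 1) = Pl j ^ N + C (a' (j + 1)) * X ^ N := fun j => rfl
  have hNpos : 0 < N := by omega
  have hCXle : ∀ b : k, (C b * X ^ N).natDegree ≤ N := fun b => natDegree_C_mul_X_pow_le b N
  have hdegPl : ∀ j, (Pl j).natDegree = N ^ (j + 1) := by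
    intro j
    induction j with
    | zero => rw [hPl0, natDegree_C_mul_X_pow N (a' 0) ha'0ne, pow_one]
    | succ j ih =>
      have hPlne : Pl j ≠ 0 := by
        intro h
        rw [h, natDegree_zero] at ih
        have : 2 ≤ N ^ (j + 1) := le_trans hN (Nat.le_self_pow (by omega) N)
        omega
      have hlc : (Pl j).leadingCoeff ^ N ≠ 0 := pow_ne_zero N (leadingCoeff_ne_zero.mpr hPlne)
      have hpow : (Pl j ^ N).natDegree = N ^ (j + 2) := by
        rw [natDegree_pow' hlc, ih]; ring
      have hlt : N < N ^ (j + 2) := by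
        calc N = N ^ 1 := (pow_one N).symm
        _ < N ^ (j + 2) := Nat.pow_lt_pow_right (by omega) (by omega)
      have hub : (Pl (j + 1)).natDegree ≤ N ^ (j + 2) := by
        rw [hPlS]
        exact le_trans (natDegree_add_le _ _)
          (max_le (le_of_eq hpow) (le_trans (hCXle _) hlt.le))
      have hco : (Pl (j + 1)).coeff (N ^ (j + 2)) ≠ 0 := by
        rw [hPlS, coeff_add]
        have h1 : (C (a' (j + 1)) * X ^ N).coeff (N ^ (j + 2)) = 0 := by
          rw [coeff_C_mul, coeff_X_pow, if_neg (by omega)]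
          ring
        rw [h1, add_zero, ← hpow]
        exact leadingCoeff_ne_zero.mpr (pow_ne_zero N hPlne)
      exact le_antisymm hub (le_natDegree_of_ne_zero hco)
  have hcoeff01 : ∀ j, (Pl j).coeff 0 = 0 ∧ (Pl j).coeff 1 = 0 := by
    intro j
    induction j with
    | zero =>
      constructor <;>
      · rw [hPl0, coeff_C_mul, coeff_X_pow, if_neg (by omega)]; ring
    | succ j ih =>
      have hdiv : Pl j = divX (Pl j) * X := by
        have := divX_mul_X_add (Pl j)
        rw [ih.1, map_zero, add_zero] at this
        exact this.symm
      have hpow : Pl j ^ N = divX (Pl j) ^ N * X ^ N := by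
        conv_lhs => rw [hdiv]
        rw [mul_pow]
      constructor
      · rw [hPlS, coeff_add, hpow, coeff_mul_X_pow', if_neg (by omega), coeff_C_mul,
          coeff_X_pow, if_neg (by omega)]
        ring
      · rw [hPlS, coeff_add, hpow, coeff_mul_X_pow', if_neg (by omega), coeff_C_mul,
          coeff_X_pow, if_neg (by omega)]
        ring
  -- the equation polynomial
  have hPls'ne : Pl s' ≠ 0 := by
    intro h
    have := hdegPl s'
    rw [h, natDegree_zero] at this
    have h2 : 2 ≤ N ^ (s' + 1) := le_trans hN (Nat.le_self_pow (by omega) N)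
    omega
  have hNs2 : 2 ≤ N ^ s := le_trans hN (Nat.le_self_pow (by omega) N)
  set R : Polynomial k := Pl s' - X with hRdef
  have hRc0 : R.coeff 0 = 0 := by
    rw [hRdef, coeff_sub, (hcoeff01 s').1, coeff_X_zero]; ring
  have hRc1 : R.coeff 1 = -1 := by
    rw [hRdef, coeff_sub, (hcoeff01 s').2, coeff_X_one]; ring
  have hRne : R ≠ 0 := by
    intro h
    rw [h, coeff_zero] at hRc1
    exact (one_ne_zero : (1 : k) ≠ 0) (by linear_combination hRc1)
  have hRdeg : 2 ≤ R.natDegree := by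
    have hco : R.coeff (N ^ s) ≠ 0 := by
      rw [hRdef, coeff_sub, coeff_X, if_neg (by omega), sub_zero]
      have hh : N ^ s = (Pl s').natDegree := by rw [hdegPl s']
      rw [hh]
      exact leadingCoeff_ne_zero.mpr hPls'ne
    have := le_natDegree_of_ne_zero hco
    omega
  have hdivXne : (divX R).degree ≠ 0 := by
    have hco : (divX R).coeff (R.natDegree - 1) ≠ 0 := by
      rw [coeff_divX]
      have h1 : R.natDegree - 1 + 1 = R.natDegree := by omega
      rw [h1]
      exact leadingCoeff_ne_zero.mpr hRne
    have hle := le_degree_of_ne_zero hco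
    intro h0
    rw [h0] at hle
    have : R.natDegree - 1 ≤ 0 := by exact_mod_cast hle
    omega
  obtain ⟨t, htroot⟩ := IsAlgClosed.exists_root _ hdivXne
  have ht0 : t ≠ 0 := by
    intro h
    rw [h] at htroot
    have h2 : (divX R).coeff 0 = 0 := by rw [coeff_zero_eq_eval_zero]; exact htroot
    rw [coeff_divX, zero_add, hRc1] at h2
    exact (one_ne_zero : (1 : k) ≠ 0) (by linear_combination -h2)
  have hRt : R.eval t = 0 := by
    have h1 := X_mul_divX_add R
    rw [hRc0, map_zero, add_zero] at h1
    rw [← h1, eval_mul, eval_X, htroot]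
    ring
  have hPlt : (Pl s').eval t = t := by
    have h2 : (Pl s' - X).eval t = 0 := hRt
    rw [eval_sub, eval_X] at h2
    exact sub_eq_zero.mp h2
  -- the coefficients
  set c : ℕ → k := fun j => (Pl j).eval t with hcdef
  have hc0 : c 0 = a' 0 * t ^ N := by
    show (Pl 0).eval t = _
    rw [hPl0, eval_mul, eval_C, eval_pow, eval_X]
  have hcS : ∀ j, c (j + 1) = c j ^ N + a' (j + 1) * t ^ N := by
    intro j
    show (Pl (j + 1)).eval t = _
    rw [hPlS, eval_add, eval_pow, eval_mul, eval_C, eval_pow, eval_X]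
  have hclast : c s' = t := hPlt
  have ha'succ : ∀ i : Fin s', a' (↑i + 1) = a i.succ := by
    intro i
    have hlt : (↑i : ℕ) + 1 < s := by omega
    show (if h : (↑i : ℕ) + 1 < s then a ⟨↑i + 1, h⟩ else 0) = a i.succ
    rw [dif_pos hlt]
    rfl
  -- the fixed vector
  set v : Fin (m + 1) → k := ∑ i : Fin s, c ↑i • W ↑i with hvdef
  have hψv : ψ v = v := by
    rw [hvdef, hψsum]
    have step1 : (∑ i : Fin s, σ (c ↑i) • ψ (W ↑i)) = ∑ i : Fin s, (c ↑i ^ N) • W (↑i + 1) :=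
      Finset.sum_congr rfl fun i _ => by rw [hσ, ← hW]
    rw [step1, Fin.sum_univ_castSucc]
    have step2 : (∑ i : Fin s', (c ↑(Fin.castSucc i) ^ N) • W (↑(Fin.castSucc i) + 1)) =
        ∑ i : Fin s', (c ↑i ^ N) • W (↑i + 1) := by
      refine Finset.sum_congr rfl fun i _ => by rw [Fin.coe_castSucc]
    have step3 : (c ↑(Fin.last s') ^ N) • W (↑(Fin.last s') + 1)
        = ∑ j : Fin s, (t ^ N * a j) • W ↑j := by
      rw [Fin.val_last, hclast]
      have hws : W (s' + 1) = W s := rfl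
      rw [hws, ← ha, Finset.smul_sum]
      exact Finset.sum_congr rfl fun j _ => by rw [smul_smul]
    rw [step2, step3, Fin.sum_univ_succ]
    have step4 : (∑ j : Fin s', (t ^ N * a (Fin.succ j)) • W ↑(Fin.succ j)) =
        ∑ j : Fin s', (t ^ N * a (Fin.succ j)) • W (↑j + 1) := by
      refine Finset.sum_congr rfl fun j _ => by rw [Fin.val_succ]
    rw [step4, ← add_assoc, add_comm (∑ i : Fin s', (c ↑i ^ N) • W (↑i + 1)), add_assoc,
      ← Finset.sum_add_distrib]
    have step5 : (∑ i : Fin s', ((c ↑i ^ N) • W (↑i + 1)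
        + (t ^ N * a (Fin.succ i)) • W (↑i + 1))) = ∑ i : Fin s', c (↑i + 1) • W (↑i + 1) := by
      refine Finset.sum_congr rfl fun i _ => ?_
      rw [← add_smul, hcS, ha'succ]
      congr 1
      ring
    rw [step5]
    have step6 : (t ^ N * a 0) • W ↑(0 : Fin s) = c 0 • W 0 := by
      have h0 : ((0 : Fin s) : ℕ) = 0 := rfl
      rw [h0, hc0, ha'0, mul_comm]
    rw [step6]
    -- now compare with v
    rw [Fin.sum_univ_succ]
    congr 1
  have hvne : v ≠ 0 := by
    intro h0
    have hz := Fintype.linearIndependent_iff.mp hindep (fun i : Fin s => c ↑i) (by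
      rw [← hvdef] at *; exact h0)
    have hlast : c s' = 0 := hz (Fin.last s')
    rw [hclast] at hlast
    exact ht0 hlast
  exact ⟨v, hvne, hψv⟩

/-- Lemma B: the fixed vectors contain a basis. -/
lemma lemB {N : ℕ} (hN : 2 ≤ N) (σ : k →+* k) (hσ : ∀ x : k, σ x = x ^ N)
    (hsurj : Function.Surjective σ) : ∀ (m : ℕ) (M : Matrix (Fin m) (Fin m) k),
    IsUnit M.det → ∃ C : Matrix (Fin m) (Fin m) k, IsUnit C.det ∧ M * C.map σ = C := by
  intro m
  induction m with
  | zero =>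
    intro M hM
    refine ⟨1, by simp, ?_⟩
    ext i j
    exact i.elim0
  | succ m ih =>
    intro M hM
    classical
    obtain ⟨v, hvne, hv⟩ := lemA hN σ hσ hsurj M hM
    obtain ⟨j₀, hj₀⟩ := Function.ne_iff.mp hvne
    set ρ : Fin m → Fin (m + 1) := Fin.succAbove j₀ with hρdef
    have hρne : ∀ j', ρ j' ≠ j₀ := fun j' => Fin.succAbove_ne j₀ j'
    have hρinj : Function.Injective ρ := Fin.succAbove_right_injective
    set P : Matrix (Fin (m + 1)) (Fin (m + 1)) k :=
      Matrix.of fun i j => Fin.cases (v i) (fun j' => if ρ j' = i then (1 : k) else 0) j with hPdef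
    have hPmul : ∀ x : Fin (m + 1) → k, P.mulVec x =
        fun i => v i * x 0 + ∑ j' : Fin m, (if ρ j' = i then (1 : k) else 0) * x j'.succ := by
      intro x
      funext i
      rw [Matrix.mulVec, dotProduct, Fin.sum_univ_succ]
      rfl
    have hPdetne : P.det ≠ 0 := by
      intro hdet
      obtain ⟨x, hxne, hx⟩ := Matrix.exists_mulVec_eq_zero_iff.mpr hdet
      rw [hPmul] at hx
      have hx0 : x 0 = 0 := by
        have h1 := congrFun hx j₀
        simp only [Pi.zero_apply] at h1
        have h2 : (∑ j' : Fin m, (if ρ j' = j₀ then (1 : k) else 0) * x j'.succ) = 0 := by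
          refine Finset.sum_eq_zero fun j' _ => ?_
          rw [if_neg (hρne j'), zero_mul]
        rw [h2, add_zero] at h1
        exact (mul_eq_zero.mp h1).resolve_left hj₀
      have hxs : ∀ i' : Fin m, x i'.succ = 0 := by
        intro i'
        have h1 := congrFun hx (ρ i')
        simp only [Pi.zero_apply] at h1
        rw [hx0, mul_zero, zero_add] at h1
        have h2 : (∑ j' : Fin m, (if ρ j' = ρ i' then (1 : k) else 0) * x j'.succ)
            = x i'.succ := by
          rw [Finset.sum_eq_single i']
          · rw [if_pos rfl, one_mul]
          · intro b _ hb
            rw [if_neg (fun h => hb (hρinj h)), zero_mul]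
          · intro h
            exact absurd (Finset.mem_univ i') h
        rw [h2] at h1
        exact h1
      refine hxne ?_
      funext i
      induction i using Fin.cases with
      | zero => exact hx0
      | succ i => exact hxs i
    have hPunit : IsUnit P.det := isUnit_iff_ne_zero.mpr hPdetne
    set M' : Matrix (Fin (m + 1)) (Fin (m + 1)) k := P⁻¹ * M * P.map σ with hM'def
    have hM'unit : IsUnit M'.det := by
      rw [hM'def, Matrix.det_mul, Matrix.det_mul]
      have h1 : P⁻¹.det * P.det = 1 := by
        rw [← Matrix.det_mul, Matrix.nonsing_inv_mul P hPunit, Matrix.det_one]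
      have h2 : (P.map ⇑σ).det = σ P.det := by
        rw [RingHom.map_det σ P]
        rfl
      exact ((IsUnit.of_mul_eq_one _ h1).mul hM).mul (by rw [h2]; exact hPunit.map σ)
    have hPcol : P.mulVec (Pi.single 0 1) = v := by
      funext i
      rw [Matrix.mulVec_single]
      show P i 0 * 1 = v i
      rw [mul_one]
      rfl
    have hPσcol : (P.map σ).mulVec (Pi.single 0 1) = σ ∘ v := by
      funext i
      rw [Matrix.mulVec_single]
      show (P.map σ) i 0 * 1 = σ (v i)
      rw [mul_one]
      rfl
    have hM'col : M'.mulVec (Pi.single 0 1) = Pi.single 0 1 := by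
      rw [hM'def, ← Matrix.mulVec_mulVec, ← Matrix.mulVec_mulVec, hPσcol, hv, ← hPcol,
        Matrix.mulVec_mulVec, Matrix.nonsing_inv_mul P hPunit, Matrix.one_mulVec]
    have hM'colapp : ∀ i, M' i 0 = (Pi.single 0 1 : Fin (m + 1) → k) i := by
      intro i
      have h := congrFun hM'col i
      rw [Matrix.mulVec_single] at h
      change M' i 0 * 1 = _ at h
      simp only [mul_one] at h
      exact h
    set Nmat := M'.submatrix Fin.succ Fin.succ with hNmatdef
    set r : Fin m → k := fun j => M' 0 j.succ with hrdef
    have hM'block : M' = blockM 1 r Nmat := by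
      ext i j
      induction i using Fin.cases with
      | zero =>
        induction j using Fin.cases with
        | zero => rw [blockM_00, hM'colapp 0, Pi.single_eq_same]
        | succ j => rfl
      | succ i =>
        induction j using Fin.cases with
        | zero => rw [blockM_s0, hM'colapp i.succ, Pi.single_eq_of_ne (Fin.succ_ne_zero i)]
        | succ j => rfl
    have hNunit : IsUnit Nmat.det := by
      have h1 : M'.det = 1 * Nmat.det := by rw [hM'block, blockM_det]
      rw [one_mul] at h1
      rw [← h1]
      exact hM'unit
    obtain ⟨D, hDunit, hND⟩ := ih Nmat hNunit
    set svec : Fin m → k := (D.map σ)ᵀ.mulVec r with hsvecdef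
    have hcex : ∀ j, ∃ t : k, t ^ N + svec j = t := fun j => as_root hN (svec j)
    choose cvec hcvec using hcex
    set C : Matrix (Fin (m + 1)) (Fin (m + 1)) k := blockM 1 cvec D with hCdef
    have hCunit : IsUnit C.det := by
      rw [hCdef, blockM_det, one_mul]
      exact hDunit
    have hM'C : M' * C.map σ = C := by
      have hσ1 : σ 1 = 1 := map_one σ
      rw [hCdef, hM'block, blockM_map, hσ1, blockM_mul, hND, one_mul]
      have hvec : (1 : k) • (⇑σ ∘ cvec) + (D.map ⇑σ)ᵀ *ᵥ r = cvec := by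
        funext j
        rw [Pi.add_apply, one_smul, Function.comp_apply, hσ]
        exact hcvec j
      rw [hvec]
    refine ⟨P * C, by rw [Matrix.det_mul]; exact hPunit.mul hCunit, ?_⟩
    have hPM' : P * M' = M * P.map σ := by
      rw [hM'def, ← mul_assoc, ← mul_assoc, Matrix.mul_nonsing_inv P hPunit, one_mul]
    rw [Matrix.map_mul, ← mul_assoc, ← hPM', mul_assoc, hM'C]

/-- Main induction. -/
lemma main (τ : k →+* k) {q : ℕ} (hq2 : 2 ≤ q) (hτ : ∀ x : k, τ x = x ^ q) :
    ∀ (m : ℕ) (A : Matrix (Fin (m + 1)) (Fin (m + 1)) k), IsUnit A.det →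
      ∃ T : Matrix (Fin (m + 1)) (Fin (m + 1)) k, IsUnit T.det ∧ Tᵀ * A * T.map τ = 1 := by
  have hq0 : 0 < q := by omega
  have hsurjτ : Function.Surjective τ := by
    intro y
    obtain ⟨z, hz⟩ := IsAlgClosed.exists_pow_nat_eq y hq0
    exact ⟨z, by rw [hτ]; exact hz⟩
  set σ : k →+* k := τ.comp τ with hσdef
  have hσ : ∀ x : k, σ x = x ^ (q * q) := by
    intro x
    show τ (τ x) = _
    rw [hτ, hτ, ← pow_mul]
  have hN : 2 ≤ q * q := by nlinarith
  have hsurjσ : Function.Surjective σ := fun y => by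
    obtain ⟨z1, hz1⟩ := hsurjτ y
    obtain ⟨z2, hz2⟩ := hsurjτ z1
    exact ⟨z2, by show τ (τ z2) = y; rw [hz2, hz1]⟩
  -- a τ-twisted dot product helper
  have hdotτ : ∀ {nn : ℕ} (x y : Fin nn → k), τ (x ⬝ᵥ y) = (⇑τ ∘ x) ⬝ᵥ (⇑τ ∘ y) := by
    intro nn x y
    rw [dotProduct, dotProduct, map_sum]
    exact Finset.sum_congr rfl fun i _ => _root_.map_mul τ _ _
  intro m
  induction m with
  | zero =>
    intro A hA
    have hdet1 : A.det = A 0 0 := Matrix.det_fin_one A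
    have ha : A 0 0 ≠ 0 := by
      intro h
      rw [hdet1, h] at hA
      exact (isUnit_iff_ne_zero.mp hA) rfl
    obtain ⟨t, ht⟩ := IsAlgClosed.exists_pow_nat_eq (A 0 0)⁻¹ (n := q + 1) (by omega)
    have ht0 : t ≠ 0 := by
      intro h
      rw [h, zero_pow (by omega)] at ht
      exact inv_ne_zero ha ht.symm
    refine ⟨Matrix.of fun _ _ => t, ?_, ?_⟩
    · rw [Matrix.det_fin_one]
      exact isUnit_iff_ne_zero.mpr ht0
    · ext i j
      have hi : i = 0 := Fin.eq_zero i
      have hj : j = 0 := Fin.eq_zero j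
      subst hi hj
      rw [Matrix.mul_apply, Fin.sum_univ_one, Matrix.mul_apply, Fin.sum_univ_one]
      show Matrix.of (fun _ _ => t) 0 0 * A 0 0 * τ t = _
      rw [hτ]
      show t * A 0 0 * t ^ q = (1 : Matrix (Fin 1) (Fin 1) k) 0 0
      rw [Matrix.one_apply_eq]
      have : t * A 0 0 * t ^ q = A 0 0 * t ^ (q + 1) := by ring
      rw [this, ht]
      exact mul_inv_cancel₀ ha
  | succ m ih =>
    intro A hA
    classical
    have hAT : IsUnit Aᵀ.det := by rw [Matrix.det_transpose]; exact hA
    have hAτ : IsUnit (A.map τ).det := by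
      have h2 : (A.map ⇑τ).det = τ A.det := by rw [RingHom.map_det τ A]; rfl
      rw [h2]; exact hA.map τ
    set Mtw : Matrix (Fin (m + 2)) (Fin (m + 2)) k := (Aᵀ)⁻¹ * A.map τ with hMtwdef
    have hMtwunit : IsUnit Mtw.det := by
      rw [hMtwdef, Matrix.det_mul]
      have h1 : (Aᵀ)⁻¹.det * Aᵀ.det = 1 := by
        rw [← Matrix.det_mul, Matrix.nonsing_inv_mul Aᵀ hAT, Matrix.det_one]
      exact (IsUnit.of_mul_eq_one _ h1).mul hAτ
    obtain ⟨Cm, hCmunit, hCmeq⟩ := lemB hN σ hσ hsurjσ (m + 2) Mtw hMtwunit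
    have hfixC : Aᵀ * Cm = A.map τ * Cm.map σ := by
      conv_lhs => rw [← hCmeq]
      rw [hMtwdef, ← mul_assoc, ← mul_assoc, Matrix.mul_nonsing_inv Aᵀ hAT, one_mul]
    -- the fixed-point predicate and the form B
    set Fix : (Fin (m + 2) → k) → Prop :=
      fun w => Aᵀ.mulVec w = (A.map τ).mulVec (⇑σ ∘ w) with hFixdef
    set Bf : (Fin (m + 2) → k) → (Fin (m + 2) → k) → k :=
      fun x y => x ⬝ᵥ (A.mulVec (⇑τ ∘ y)) with hBfdef
    have hmulτ : ∀ x : Fin (m + 2) → k, ⇑τ ∘ (A.mulVec x) = (A.map τ).mulVec (⇑τ ∘ x) := by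
      intro x
      funext i
      show τ (A.mulVec x i) = _
      rw [Matrix.mulVec, Matrix.mulVec, dotProduct, dotProduct, map_sum]
      exact Finset.sum_congr rfl fun l _ => _root_.map_mul τ _ _
    have hkey : ∀ w, Fix w → ∀ y, τ (Bf y w) = Bf w y := by
      intro w hw y
      rw [hBfdef]
      show τ (y ⬝ᵥ (A.mulVec (⇑τ ∘ w))) = w ⬝ᵥ (A.mulVec (⇑τ ∘ y))
      rw [hdotτ, hmulτ]
      have hcomp : ⇑τ ∘ (⇑τ ∘ w) = ⇑σ ∘ w := rfl
      rw [hcomp, ← hw]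
      rw [dotProduct_mulVec, Matrix.vecMul_transpose, dotProduct_comm]
    have hFixadd : ∀ w1 w2, Fix w1 → Fix w2 → Fix (w1 + w2) := by
      intro w1 w2 h1 h2
      rw [hFixdef]
      show Aᵀ.mulVec (w1 + w2) = (A.map τ).mulVec (⇑σ ∘ (w1 + w2))
      have hc : ⇑σ ∘ (w1 + w2) = ⇑σ ∘ w1 + ⇑σ ∘ w2 := by
        funext i; exact _root_.map_add σ _ _
      rw [hc, Matrix.mulVec_add, Matrix.mulVec_add, h1, h2]
    have hFixsmul : ∀ (lam : k) w, σ lam = lam → Fix w → Fix (lam • w) := by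
      intro lam w hlam hw
      show Aᵀ.mulVec (lam • w) = (A.map τ).mulVec (⇑σ ∘ (lam • w))
      have hc : ⇑σ ∘ (lam • w) = lam • (⇑σ ∘ w) := by
        funext i
        show σ (lam * w i) = lam * σ (w i)
        rw [_root_.map_mul σ, hlam]
      rw [hc, Matrix.mulVec_smul, Matrix.mulVec_smul, hw]
    have hFixcol : ∀ j, Fix (fun i => Cm i j) := by
      intro j
      have h1 := congrArg (fun X => X.mulVec (Pi.single j 1)) hfixC
      rw [← Matrix.mulVec_mulVec, ← Matrix.mulVec_mulVec] at h1
      have e1 : Cm *ᵥ Pi.single j 1 = fun i => Cm i j := by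
        rw [Matrix.mulVec_single]
        funext i
        show Cm i j * 1 = Cm i j
        rw [mul_one]
      have e2 : Cm.map σ *ᵥ Pi.single j 1 = ⇑σ ∘ (fun i => Cm i j) := by
        rw [Matrix.mulVec_single]
        funext i
        show Cm.map σ i j * 1 = σ (Cm i j)
        rw [mul_one]
        rfl
      rw [e1, e2] at h1
      exact h1
    -- the good scalar λ
    obtain ⟨μ, hμ⟩ := IsAlgClosed.exists_pow_nat_eq (-1 : k) (n := q - 1) (by omega)
    have hμ0 : μ ≠ 0 := by
      intro h
      rw [h, zero_pow (by omega)] at hμ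
      exact neg_ne_zero.mpr (one_ne_zero : (1 : k) ≠ 0) hμ.symm
    have hμq : τ μ = -μ := by
      rw [hτ]
      have : q = q - 1 + 1 := by omega
      rw [this, pow_succ, hμ]
      ring
    obtain ⟨lam, hlam⟩ := as_root (le_refl 2 |>.trans hq2) (-μ)
    have hlamτ : τ lam = lam + μ := by rw [hτ]; linear_combination hlam
    have hlamσ : σ lam = lam := by
      show τ (τ lam) = lam
      rw [hlamτ, _root_.map_add, hlamτ, hμq]
      ring
    have hlamne : τ lam ≠ lam := by
      rw [hlamτ]
      intro h
      exact hμ0 (by linear_combination h)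
    have htriple : ∀ (U V : Matrix (Fin (m + 2)) (Fin (m + 2)) k) (i j : Fin (m + 2)),
        (Uᵀ * A * V) i j = (fun l => U l i) ⬝ᵥ (A.mulVec (fun l => V l j)) := by
      intro U V i j
      simp only [Matrix.mul_apply, dotProduct, Matrix.mulVec, Matrix.transpose_apply,
        Finset.sum_mul, Finset.mul_sum]
      rw [Finset.sum_comm]
      exact Finset.sum_congr rfl fun t _ => Finset.sum_congr rfl fun l _ => by ring
    -- existence of a Fix vector with nonzero self-pairing
    have hgood : ∃ w, Fix w ∧ Bf w w ≠ 0 := by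
      by_contra hno
      push_neg at hno
      have hBzero : ∀ w1 w2, Fix w1 → Fix w2 → Bf w1 w2 = 0 := by
        intro w1 w2 h1 h2
        have hsum : Bf w1 w2 + Bf w2 w1 = 0 := by
          have h12 := hno _ (hFixadd w1 w2 h1 h2)
          have h11 := hno w1 h1
          have h22 := hno w2 h2
          have hexp : Bf (w1 + w2) (w1 + w2) = Bf w1 w1 + Bf w1 w2 + Bf w2 w1 + Bf w2 w2 := by
            show (w1 + w2) ⬝ᵥ (A.mulVec (⇑τ ∘ (w1 + w2))) = _
            have hc : ⇑τ ∘ (w1 + w2) = ⇑τ ∘ w1 + ⇑τ ∘ w2 := by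
              funext i; exact _root_.map_add τ _ _
            rw [hc, Matrix.mulVec_add, dotProduct_add, add_dotProduct,
              add_dotProduct]
            show (Bf w1 w1 + Bf w2 w1) + (Bf w1 w2 + Bf w2 w2) = _
            ring
          rw [h12, h11, h22] at hexp
          linear_combination -hexp
        have hstar : ∀ wa wb, Fix wa → Fix wb → τ (Bf wa wb) = - Bf wa wb := by
          intro wa wb ha hb
          have h1 := hkey wb hb wa
          have hsum2 : Bf wa wb + Bf wb wa = 0 := by
            have h12 := hno _ (hFixadd wa wb ha hb)
            have h11 := hno wa ha
            have h22 := hno wb hb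
            have hexp : Bf (wa + wb) (wa + wb) = Bf wa wa + Bf wa wb + Bf wb wa + Bf wb wb := by
              show (wa + wb) ⬝ᵥ (A.mulVec (⇑τ ∘ (wa + wb))) = _
              have hc : ⇑τ ∘ (wa + wb) = ⇑τ ∘ wa + ⇑τ ∘ wb := by
                funext i; exact _root_.map_add τ _ _
              rw [hc, Matrix.mulVec_add, dotProduct_add, add_dotProduct,
                add_dotProduct]
              show (Bf wa wa + Bf wb wa) + (Bf wa wb + Bf wb wb) = _
              ring
            rw [h12, h11, h22] at hexp
            linear_combination -hexp
          rw [h1]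
          linear_combination hsum2
        have hlam1 := hstar (lam • w1) w2 (hFixsmul lam w1 hlamσ h1) h2
        have hlam0 := hstar w1 w2 h1 h2
        have hsm : Bf (lam • w1) w2 = lam * Bf w1 w2 := by
          show (lam • w1) ⬝ᵥ (A.mulVec (⇑τ ∘ w2)) = _
          rw [smul_dotProduct]
          rfl
        rw [hsm, _root_.map_mul τ] at hlam1
        rw [hlam0] at hlam1
        have hfac : (τ lam - lam) * Bf w1 w2 = 0 := by linear_combination -hlam1
        rcases mul_eq_zero.mp hfac with h | h
        · exact absurd (by linear_combination h) hlamne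
        · exact h
      -- contradiction with invertibility
      have hzero : Cmᵀ * A * Cm.map τ = 0 := by
        ext i j
        rw [htriple, Matrix.zero_apply]
        exact hBzero (fun l => Cm l i) (fun l => Cm l j) (hFixcol i) (hFixcol j)
      have hdetz := congrArg Matrix.det hzero
      rw [Matrix.det_mul, Matrix.det_mul, Matrix.det_zero] at hdetz
      have hCτ : IsUnit (Cm.map τ).det := by
        have h2 : (Cm.map ⇑τ).det = τ Cm.det := by rw [RingHom.map_det τ Cm]; rfl
        rw [h2]; exact hCmunit.map τ
      have hCT : IsUnit Cmᵀ.det := by rw [Matrix.det_transpose]; exact hCmunit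
      have hcontra : IsUnit (0 : k) := by rw [← hdetz]; exact (hCT.mul hA).mul hCτ
      exact (isUnit_iff_ne_zero.mp hcontra) rfl
    obtain ⟨w, hwFix, hwB⟩ := hgood
    obtain ⟨lam2, hlam2⟩ := IsAlgClosed.exists_pow_nat_eq (Bf w w)⁻¹ (n := q + 1) (by omega)
    have hlam2ne : lam2 ≠ 0 := by
      intro h
      rw [h, zero_pow (by omega)] at hlam2
      exact inv_ne_zero hwB hlam2.symm
    set v' : Fin (m + 2) → k := lam2 • w with hv'def
    have hBsmulr : ∀ (x : Fin (m + 2) → k) (lamx : k) (y : Fin (m + 2) → k),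
        Bf x (lamx • y) = τ lamx * Bf x y := by
      intro x lamx y
      show x ⬝ᵥ (A.mulVec (⇑τ ∘ (lamx • y))) = _
      have hc : ⇑τ ∘ (lamx • y) = τ lamx • (⇑τ ∘ y) := by
        funext i
        exact _root_.map_mul τ _ _
      rw [hc, Matrix.mulVec_smul, dotProduct_smul]
      rfl
    have hBsmull : ∀ (lamx : k) (x y : Fin (m + 2) → k), Bf (lamx • x) y = lamx * Bf x y := by
      intro lamx x y
      show (lamx • x) ⬝ᵥ _ = _
      rw [smul_dotProduct]
      rfl
    have hv'B : Bf v' v' = 1 := by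
      rw [hv'def, hBsmull, hBsmulr, hτ]
      have h1 : lam2 * (lam2 ^ q * Bf w w) = lam2 ^ (q + 1) * Bf w w := by ring
      rw [h1, hlam2]
      exact inv_mul_cancel₀ hwB
    have hv'ne : v' ≠ 0 := by
      intro h
      rw [h] at hv'B
      have h2 : Bf 0 0 = 0 := by
        show (0 : Fin (m + 2) → k) ⬝ᵥ _ = 0
        rw [zero_dotProduct]
      rw [h2] at hv'B
      exact (one_ne_zero : (1 : k) ≠ 0) hv'B.symm
    have horth : ∀ y, Bf y v' = 0 ↔ Bf v' y = 0 := by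
      intro y
      have h1 : Bf y v' = τ lam2 * Bf y w := hBsmulr y lam2 w
      have h2 : Bf v' y = lam2 * Bf w y := hBsmull lam2 w y
      have h3 : Bf w y = τ (Bf y w) := (hkey w hwFix y).symm
      rw [h1, h2, h3]
      constructor
      · intro h
        rcases mul_eq_zero.mp h with h | h
        · exact absurd h (by rw [hτ]; exact pow_ne_zero q hlam2ne)
        · rw [h, map_zero, mul_zero]
      · intro h
        rcases mul_eq_zero.mp h with h | h
        · exact absurd h hlam2ne
        · have h4 : Bf y w = 0 := by
            rw [hτ] at h
            exact pow_eq_zero_iff (by omega) |>.mp h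
          rw [h4, mul_zero]
    set u : Fin (m + 2) → k := A.mulVec (⇑τ ∘ v') with hudef
    have hv'u : v' ⬝ᵥ u = 1 := hv'B
    obtain ⟨j₀, hj₀⟩ := Function.ne_iff.mp hv'ne
    set ρ : Fin (m + 1) → Fin (m + 2) := j₀.succAbove with hρdef
    have hρne : ∀ j' : Fin (m + 1), ρ j' ≠ j₀ := fun j' => Fin.succAbove_ne j₀ j'
    have hρinj : Function.Injective ρ := Fin.succAbove_right_injective
    set T₁ : Matrix (Fin (m + 2)) (Fin (m + 2)) k :=
      Matrix.of fun i j => Fin.cases (v' i)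
        (fun j' => (if ρ j' = i then (1 : k) else 0) - u (ρ j') * v' i) j with hT₁def
    have hcol0 : (fun i => T₁ i 0) = v' := rfl
    have hlsucc : ∀ j' : Fin (m + 1), (fun i => T₁ i j'.succ) ⬝ᵥ u = 0 := by
      intro j'
      show (∑ i, ((if ρ j' = i then (1 : k) else 0) - u (ρ j') * v' i) * u i) = 0
      have h1 : ∀ i, ((if ρ j' = i then (1 : k) else 0) - u (ρ j') * v' i) * u i
          = (if ρ j' = i then u i else 0) - u (ρ j') * (v' i * u i) := by
        intro i
        split <;> ring
      rw [Finset.sum_congr rfl fun i _ => h1 i, Finset.sum_sub_distrib, Finset.sum_ite_eq,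
        if_pos (Finset.mem_univ _), ← Finset.mul_sum]
      have h2 : (∑ i, v' i * u i) = v' ⬝ᵥ u := rfl
      rw [h2, hv'u, mul_one, sub_self]
    have hT₁mul : ∀ x : Fin (m + 2) → k, T₁.mulVec x = fun i => v' i * x 0 +
        ∑ j' : Fin (m + 1), ((if ρ j' = i then (1 : k) else 0) - u (ρ j') * v' i) * x j'.succ := by
      intro x
      funext i
      rw [Matrix.mulVec, dotProduct, Fin.sum_univ_succ]
      rfl
    have hswap : ∀ x : Fin (m + 2) → k, (T₁.mulVec x) ⬝ᵥ u =
        ∑ j, x j * ((fun i => T₁ i j) ⬝ᵥ u) := by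
      intro x
      simp only [Matrix.mulVec, dotProduct, Finset.sum_mul, Finset.mul_sum]
      rw [Finset.sum_comm]
      exact Finset.sum_congr rfl fun j _ => Finset.sum_congr rfl fun i _ => by ring
    have hT₁detne : T₁.det ≠ 0 := by
      intro hdet
      obtain ⟨x, hxne, hx⟩ := Matrix.exists_mulVec_eq_zero_iff.mpr hdet
      have hx0 : x 0 = 0 := by
        have hdot : (T₁.mulVec x) ⬝ᵥ u = 0 := by rw [hx, zero_dotProduct]
        rw [hswap] at hdot
        have hsum : (∑ j, x j * ((fun i => T₁ i j) ⬝ᵥ u)) = x 0 := by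
          rw [Fin.sum_univ_succ]
          have h1 : (fun i => T₁ i 0) ⬝ᵥ u = 1 := by rw [hcol0]; exact hv'u
          rw [h1, mul_one]
          have h2 : (∑ j' : Fin (m + 1), x j'.succ * ((fun i => T₁ i j'.succ) ⬝ᵥ u)) = 0 :=
            Finset.sum_eq_zero fun j' _ => by rw [hlsucc, mul_zero]
          rw [h2, add_zero]
        rw [hsum] at hdot
        exact hdot
      have hxco : ∀ i, v' i * x 0 + (∑ j' : Fin (m + 1),
          ((if ρ j' = i then (1 : k) else 0) - u (ρ j') * v' i) * x j'.succ) = 0 := by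
        intro i
        have h1 : T₁.mulVec x i = v' i * x 0 + ∑ j' : Fin (m + 1),
            ((if ρ j' = i then (1 : k) else 0) - u (ρ j') * v' i) * x j'.succ :=
          congrFun (hT₁mul x) i
        rw [← h1, hx]
        rfl
      have hK : (∑ j' : Fin (m + 1), u (ρ j') * x j'.succ) = 0 := by
        have h := hxco j₀
        rw [hx0, mul_zero, zero_add] at h
        have h2 : (∑ j' : Fin (m + 1),
            ((if ρ j' = j₀ then (1 : k) else 0) - u (ρ j') * v' j₀) * x j'.succ)
            = -(v' j₀ * ∑ j' : Fin (m + 1), u (ρ j') * x j'.succ) := by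
          rw [Finset.mul_sum, ← Finset.sum_neg_distrib]
          refine Finset.sum_congr rfl fun j' _ => ?_
          rw [if_neg (hρne j')]
          ring
        rw [h2] at h
        have h3 : v' j₀ * (∑ j' : Fin (m + 1), u (ρ j') * x j'.succ) = 0 := by
          linear_combination -h
        exact (mul_eq_zero.mp h3).resolve_left hj₀
      have hxs : ∀ i' : Fin (m + 1), x i'.succ = 0 := by
        intro i'
        have h := hxco (ρ i')
        rw [hx0, mul_zero, zero_add] at h
        have h2 : (∑ j' : Fin (m + 1),
            ((if ρ j' = ρ i' then (1 : k) else 0) - u (ρ j') * v' (ρ i')) * x j'.succ)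
            = x i'.succ - v' (ρ i') * ∑ j' : Fin (m + 1), u (ρ j') * x j'.succ := by
          have hsplit : ∀ j' : Fin (m + 1),
              ((if ρ j' = ρ i' then (1 : k) else 0) - u (ρ j') * v' (ρ i')) * x j'.succ
              = (if ρ j' = ρ i' then x j'.succ else 0) - v' (ρ i') * (u (ρ j') * x j'.succ) := by
            intro j'
            split <;> ring
          rw [Finset.sum_congr rfl fun j' _ => hsplit j', Finset.sum_sub_distrib, ← Finset.mul_sum]
          congr 1
          rw [Finset.sum_eq_single i']
          · rw [if_pos rfl]
          · intro b _ hb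
            rw [if_neg (fun hh => hb (hρinj hh))]
          · intro hh
            exact absurd (Finset.mem_univ i') hh
        rw [h2, hK, mul_zero, sub_zero] at h
        exact h
      refine hxne ?_
      funext i
      induction i using Fin.cases with
      | zero => exact hx0
      | succ i => exact hxs i
    have hT₁unit : IsUnit T₁.det := isUnit_iff_ne_zero.mpr hT₁detne
    set A₁ : Matrix (Fin (m + 2)) (Fin (m + 2)) k := T₁ᵀ * A * T₁.map τ with hA₁def
    have hA₁app : ∀ i j, A₁ i j = Bf (fun l => T₁ l i) (fun l => T₁ l j) := by
      intro i j
      rw [hA₁def, htriple]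
      rfl
    have hA₁00 : A₁ 0 0 = 1 := by
      rw [hA₁app]
      show Bf v' v' = 1
      exact hv'B
    have hA₁s0 : ∀ i' : Fin (m + 1), A₁ i'.succ 0 = 0 := by
      intro i'
      rw [hA₁app]
      show Bf (fun l => T₁ l i'.succ) v' = 0
      exact hlsucc i'
    have hA₁0s : ∀ j' : Fin (m + 1), A₁ 0 j'.succ = 0 := by
      intro j'
      rw [hA₁app]
      show Bf v' (fun l => T₁ l j'.succ) = 0
      exact (horth _).mp (hlsucc j')
    set A' := A₁.submatrix Fin.succ Fin.succ with hA'def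
    have hA₁block : A₁ = blockM 1 0 A' := by
      ext i j
      induction i using Fin.cases with
      | zero =>
        induction j using Fin.cases with
        | zero => rw [blockM_00, hA₁00]
        | succ j => rw [blockM_0s, hA₁0s]; rfl
      | succ i =>
        induction j using Fin.cases with
        | zero => rw [blockM_s0, hA₁s0]
        | succ j => rfl
    have hA₁unit : IsUnit A₁.det := by
      rw [hA₁def, Matrix.det_mul, Matrix.det_mul, Matrix.det_transpose]
      have hTτ : IsUnit (T₁.map τ).det := by
        have h2 : (T₁.map ⇑τ).det = τ T₁.det := by rw [RingHom.map_det τ T₁]; rfl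
        rw [h2]
        exact hT₁unit.map τ
      exact (hT₁unit.mul hA).mul hTτ
    have hA'unit : IsUnit A'.det := by
      have h1 : A₁.det = 1 * A'.det := by rw [hA₁block, blockM_det]
      rw [one_mul] at h1
      rw [← h1]
      exact hA₁unit
    obtain ⟨T', hT'unit, hT'eq⟩ := ih A' hA'unit
    set T₂ : Matrix (Fin (m + 2)) (Fin (m + 2)) k := blockM 1 0 T' with hT₂def
    have hT₂unit : IsUnit T₂.det := by
      rw [hT₂def, blockM_det, one_mul]
      exact hT'unit
    refine ⟨T₁ * T₂, by rw [Matrix.det_mul]; exact hT₁unit.mul hT₂unit, ?_⟩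
    rw [Matrix.transpose_mul, Matrix.map_mul]
    have hassoc : T₂ᵀ * T₁ᵀ * A * (T₁.map ⇑τ * T₂.map ⇑τ) = T₂ᵀ * A₁ * T₂.map ⇑τ := by
      rw [hA₁def]
      simp only [mul_assoc]
    rw [hassoc, hA₁block, hT₂def, blockM_transpose, blockM_map]
    have hτ0 : ⇑τ ∘ (0 : Fin (m + 1) → k) = 0 := by
      funext i
      exact map_zero τ
    have hτ1 : τ (1 : k) = 1 := map_one τ
    rw [hτ0, hτ1, blockM_mul, blockM_mul, hT'eq]
    have e1 : (1 : k) • (0 : Fin (m + 1) → k) + A'ᵀ *ᵥ 0 = 0 := by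
      rw [smul_zero, Matrix.mulVec_zero, add_zero]
    rw [e1]
    have e2 : ((1 : k) * 1) • (0 : Fin (m + 1) → k) + (T'.map ⇑τ)ᵀ *ᵥ 0 = 0 := by
      rw [smul_zero, Matrix.mulVec_zero, add_zero]
    rw [e2, mul_one, one_mul]
    exact blockM_one

end FermatNF

theorem fermat_normal_form (p q e n : ℕ) (hp : p.Prime) (he : 0 < e) (hq : q = p ^ e)
    (k : Type*) [Field k] [IsAlgClosed k] [CharP k p]
    (A : Matrix (Fin (n + 1)) (Fin (n + 1)) k) (hA : IsUnit A.det) :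
    ∃ T : Matrix (Fin (n + 1)) (Fin (n + 1)) k, IsUnit T.det ∧
      Tᵀ * A * T.map (fun x => x ^ q) = 1 := by
  haveI := Fact.mk hp
  have hτ : ∀ x : k, iterateFrobenius k p e x = x ^ q := by
    intro x; rw [iterateFrobenius_def, hq]
  have hq2 : 2 ≤ q := by
    rw [hq]
    calc 2 ≤ p := hp.two_le
    _ = p ^ 1 := (pow_one p).symm
    _ ≤ p ^ e := Nat.pow_le_pow_right hp.pos he
  obtain ⟨T, hT, hTeq⟩ := FermatNF.main (iterateFrobenius k p e) hq2 hτ n A hA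
  refine ⟨T, hT, ?_⟩
  rw [show (fun x : k => x ^ q) = ⇑(iterateFrobenius k p e) from funext fun x => (hτ x).symm]
  exact hTeq
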